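/- With S the involution fixing K and negating L, one has (2I-(P+Q))S = P-Q and S*J = JS, and the polar decomposition of S is S = JΔ^{1/2} where Δ = (2I-(P+Q))/(P+Q). -/

import Mathlib

set_option maxHeartbeats 1000000
set_option synthInstance.maxHeartbeats 400000

open ContinuousLinearMap

section Helpers

variable {V : Type*} [NormedAddCommGroup V] [InnerProductSpace ℝ V] [CompleteSpace V]

local notation "⟪" x ", " y "⟫" => @inner ℝ V _ x y

private lemma pos_inner_nonneg {T : V →L[ℝ] V} (hT : T.IsPositive) (x : V) : 0 ≤ ⟪T x, x⟫ := by
  have h := hT.2 x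
  rwa [ContinuousLinearMap.reApplyInnerSelf_apply, RCLike.re_to_real] at h

private lemma isPositive_of_inner {T : V →L[ℝ] V} (hsa : IsSelfAdjoint T)
    (h : ∀ x, 0 ≤ ⟪T x, x⟫) : T.IsPositive := by
  refine ⟨hsa.isSymmetric, fun x => ?_⟩
  rw [ContinuousLinearMap.reApplyInnerSelf_apply, RCLike.re_to_real]
  exact h x

private lemma sa_inner_move {T : V →L[ℝ] V} (hsa : IsSelfAdjoint T) (x y : V) :
    ⟪T x, y⟫ = ⟪x, T y⟫ := by
  have h := ContinuousLinearMap.adjoint_inner_left T y x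
  rwa [ContinuousLinearMap.isSelfAdjoint_iff'.mp hsa] at h

private lemma pos_cauchy_schwarz {T : V →L[ℝ] V} (hT : T.IsPositive) (x y : V) :
    ⟪T x, y⟫ ^ 2 ≤ ⟪T x, x⟫ * ⟪T y, y⟫ := by
  have key : ∀ t : ℝ, 0 ≤ ⟪T y, y⟫ * (t * t) + (2 * ⟪T x, y⟫) * t + ⟪T x, x⟫ := by
    intro t
    have h0 := pos_inner_nonneg hT (x + t • y)
    have hTapp : T (x + t • y) = T x + t • T y := by
      rw [map_add, map_smul]
    rw [hTapp] at h0
    have hyx : ⟪T y, x⟫ = ⟪T x, y⟫ := by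
      rw [sa_inner_move hT.isSelfAdjoint y x, real_inner_comm]
    simp only [inner_add_left, inner_add_right, real_inner_smul_left, real_inner_smul_right,
      hyx] at h0
    nlinarith [h0]
  have hd := discrim_le_zero key
  rw [discrim] at hd
  nlinarith [hd]

private lemma pos_norm_sq {T : V →L[ℝ] V} (hT : T.IsPositive) (x : V) :
    ‖T x‖ ^ 2 ≤ ‖T‖ * ⟪T x, x⟫ := by
  rcases eq_or_ne (T x) 0 with h | h
  · rw [h]
    simp
  · have h1 := pos_cauchy_schwarz hT x (T x)
    have h2 : ⟪T x, T x⟫ = ‖T x‖ ^ 2 := real_inner_self_eq_norm_sq (T x)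
    have h3 : ⟪T (T x), T x⟫ ≤ ‖T‖ * ‖T x‖ * ‖T x‖ := by
      calc ⟪T (T x), T x⟫ ≤ ‖T (T x)‖ * ‖T x‖ := real_inner_le_norm _ _
        _ ≤ (‖T‖ * ‖T x‖) * ‖T x‖ := by
            exact mul_le_mul_of_nonneg_right (T.le_opNorm (T x)) (norm_nonneg _)
        _ = ‖T‖ * ‖T x‖ * ‖T x‖ := rfl
    have hx : (0:ℝ) < ‖T x‖ := norm_pos_iff.mpr h
    have h4 : ⟪T x, x⟫ * ⟪T (T x), T x⟫ ≤ ⟪T x, x⟫ * (‖T‖ * ‖T x‖ * ‖T x‖) :=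
      mul_le_mul_of_nonneg_left h3 (pos_inner_nonneg hT x)
    nlinarith [h4, mul_pos hx hx, h1, h2, pos_inner_nonneg hT x]

private lemma pos_apply_eq_zero {T : V →L[ℝ] V} (hT : T.IsPositive) {x : V}
    (h : ⟪T x, x⟫ ≤ 0) : T x = 0 := by
  have h1 := pos_norm_sq hT x
  have h2 : ‖T x‖ ^ 2 ≤ 0 := by nlinarith [norm_nonneg T]
  have h3 : ‖T x‖ = 0 := by nlinarith [norm_nonneg (T x)]
  exact norm_eq_zero.mp h3

private lemma pos_norm_le {T : V →L[ℝ] V} (hT : T.IsPositive) {q : ℝ} (hq : 0 ≤ q)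
    (h : ∀ x, ⟪T x, x⟫ ≤ q * ‖x‖ ^ 2) : ‖T‖ ≤ q := by
  have h1 : ∀ x, ‖T x‖ ^ 2 ≤ (‖T‖ * q) * ‖x‖ ^ 2 := by
    intro x
    have := pos_norm_sq hT x
    have h2 := h x
    nlinarith [norm_nonneg T]
  have h2 : ‖T‖ ≤ Real.sqrt (‖T‖ * q) := by
    refine T.opNorm_le_bound (Real.sqrt_nonneg _) (fun x => ?_)
    have h3 : ‖T x‖ ≤ Real.sqrt ((‖T‖ * q) * ‖x‖ ^ 2) := by
      rw [← Real.sqrt_sq (norm_nonneg (T x))]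
      exact Real.sqrt_le_sqrt (h1 x)
    rwa [Real.sqrt_mul (mul_nonneg (norm_nonneg T) hq), Real.sqrt_sq (norm_nonneg x)] at h3
  have h4 : ‖T‖ ^ 2 ≤ ‖T‖ * q := by
    nlinarith [Real.sq_sqrt (mul_nonneg (norm_nonneg T) hq), Real.sqrt_nonneg (‖T‖ * q),
      norm_nonneg T]
  rcases eq_or_lt_of_le (norm_nonneg T) with h5 | h5
  · linarith [h5.symm]
  · nlinarith [h4]

private lemma sqrt_unique {C D : V →L[ℝ] V} (hC : C.IsPositive) (hD : D.IsPositive)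
    (hcomm : C * D = D * C) (hsq : C * C = D * D) : C = D := by
  have hYX : (C + D) * (C - D) = 0 := by
    have e : (C + D) * (C - D) = C * C - D * D + (D * C - C * D) := by noncomm_ring
    rw [hsq, hcomm] at e
    simpa using e
  have key : ∀ x, (C - D) ((C - D) x) = 0 := by
    intro x
    set y := (C - D) x with hy
    have h0 : ⟪C y, y⟫ + ⟪D y, y⟫ = 0 := by
      have : C y + D y = 0 := by
        have h := ContinuousLinearMap.ext_iff.mp hYX x
        simpa [ContinuousLinearMap.mul_apply, ContinuousLinearMap.add_apply,
          ContinuousLinearMap.sub_apply, hy] using h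
      rw [← inner_add_left, this, inner_zero_left]
    have hCy : C y = 0 := pos_apply_eq_zero hC (by linarith [pos_inner_nonneg hD y])
    have hDy : D y = 0 := pos_apply_eq_zero hD (by linarith [pos_inner_nonneg hC y])
    show (C - D) y = 0
    rw [ContinuousLinearMap.sub_apply, hCy, hDy, sub_zero]
  ext x
  have hEsa : IsSelfAdjoint (C - D) := hC.isSelfAdjoint.sub hD.isSelfAdjoint
  have h1 : ⟪(C - D) x, (C - D) x⟫ = 0 := by
    rw [sa_inner_move hEsa x ((C - D) x), key x, inner_zero_right]
  have h2 : (C - D) x = 0 := inner_self_eq_zero.mp h1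
  have := congrArg (fun v => v + D x) h2
  simpa [ContinuousLinearMap.sub_apply] using this

private lemma sa_smul {c : ℝ} {X : V →L[ℝ] V} (hX : IsSelfAdjoint X) :
    IsSelfAdjoint (c • X) := by
  have : star (c • X) = c • X := by rw [star_smul, star_trivial, hX.star_eq]
  exact this

private lemma exists_sqrt (M N : V →L[ℝ] V) (hM : M.IsPositive) (h1 : M * N = 1)
    (h2 : N * M = 1) :
    ∃ R : V →L[ℝ] V, R.IsPositive ∧ R * R = M ∧ ∀ W, M * W = W * M → R * W = W * R := by
  by_cases hM0 : M = 0
  · refine ⟨0, isPositive_zero, by rw [mul_zero, hM0], fun W _ => by rw [zero_mul, mul_zero]⟩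
  have hν : (0:ℝ) < ‖M‖ := norm_pos_iff.mpr hM0
  set ν := ‖M‖ with hνdef
  have hone : (1 : V →L[ℝ] V) ≠ 0 := by
    intro hone
    apply hM0
    rw [← mul_one M, hone, mul_zero]
  have hNne : N ≠ 0 := by
    rintro rfl
    rw [mul_zero] at h1
    exact hone h1.symm
  have hNpos : (0:ℝ) < ‖N‖ := norm_pos_iff.mpr hNne
  have hlow : ∀ x : V, ‖x‖ ≤ ‖N‖ * ‖M x‖ := by
    intro x
    have hx : N (M x) = x := by
      have := ContinuousLinearMap.ext_iff.mp h2 x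
      simpa [ContinuousLinearMap.mul_apply] using this
    calc ‖x‖ = ‖N (M x)‖ := by rw [hx]
      _ ≤ ‖N‖ * ‖M x‖ := N.le_opNorm (M x)
  set δ : ℝ := 1 / (ν ^ 2 * ‖N‖ ^ 2) with hδdef
  have hδpos : 0 < δ := by positivity
  have hδeq : δ * (ν * ‖N‖ ^ 2) = ν⁻¹ := by
    rw [hδdef]
    field_simp
  have hMform : ∀ x, δ * ‖x‖ ^ 2 ≤ ν⁻¹ * ⟪M x, x⟫ := by
    intro x
    have hsq := pos_norm_sq hM x
    rw [← hνdef] at hsq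
    have hl := hlow x
    have hx2 : ‖x‖ ^ 2 ≤ ‖N‖ ^ 2 * ‖M x‖ ^ 2 := by
      nlinarith [norm_nonneg x, norm_nonneg (M x)]
    have key : ‖x‖ ^ 2 ≤ ν * ‖N‖ ^ 2 * ⟪M x, x⟫ := by
      calc ‖x‖ ^ 2 ≤ ‖N‖ ^ 2 * ‖M x‖ ^ 2 := hx2
        _ ≤ ‖N‖ ^ 2 * (ν * ⟪M x, x⟫) := mul_le_mul_of_nonneg_left hsq (sq_nonneg _)
        _ = ν * ‖N‖ ^ 2 * ⟪M x, x⟫ := by ring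
    calc δ * ‖x‖ ^ 2 ≤ δ * (ν * ‖N‖ ^ 2 * ⟪M x, x⟫) :=
          mul_le_mul_of_nonneg_left key hδpos.le
      _ = δ * (ν * ‖N‖ ^ 2) * ⟪M x, x⟫ := by ring
      _ = ν⁻¹ * ⟪M x, x⟫ := by rw [hδeq]
  have hMform2 : ∀ x, ν⁻¹ * ⟪M x, x⟫ ≤ ‖x‖ ^ 2 := by
    intro x
    have ha : ⟪M x, x⟫ ≤ ν * ‖x‖ ^ 2 := by
      calc ⟪M x, x⟫ ≤ ‖M x‖ * ‖x‖ := real_inner_le_norm _ _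
        _ ≤ (ν * ‖x‖) * ‖x‖ := mul_le_mul_of_nonneg_right (M.le_opNorm x) (norm_nonneg x)
        _ = ν * ‖x‖ ^ 2 := by ring
    have hb : ν⁻¹ * ⟪M x, x⟫ ≤ ν⁻¹ * (ν * ‖x‖ ^ 2) :=
      mul_le_mul_of_nonneg_left ha (by positivity)
    calc ν⁻¹ * ⟪M x, x⟫ ≤ ν⁻¹ * (ν * ‖x‖ ^ 2) := hb
      _ = (ν⁻¹ * ν) * ‖x‖ ^ 2 := by ring
      _ = ‖x‖ ^ 2 := by rw [inv_mul_cancel₀ (ne_of_gt hν), one_mul]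
  have hδ1 : δ ≤ 1 := by
    obtain ⟨x0, hx0⟩ : ∃ x : V, M x ≠ 0 := by
      by_contra hc
      push_neg at hc
      exact hM0 (ContinuousLinearMap.ext fun x => by rw [hc x]; rfl)
    have hx0ne : x0 ≠ 0 := by
      rintro rfl
      exact hx0 (map_zero M)
    have hx0pos : (0:ℝ) < ‖x0‖ := norm_pos_iff.mpr hx0ne
    have := (hMform x0).trans (hMform2 x0)
    nlinarith [this, mul_pos hx0pos hx0pos]
  set q : ℝ := 1 - δ with hqdef
  have hq0 : 0 ≤ q := by linarith
  have hq1 : q < 1 := by linarith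
  set Y : V →L[ℝ] V := 1 - ν⁻¹ • M with hYdef
  have hMsa : IsSelfAdjoint M := hM.isSelfAdjoint
  have hYsa : IsSelfAdjoint Y := by
    rw [hYdef]
    exact (IsSelfAdjoint.one (V →L[ℝ] V)).sub (sa_smul hMsa)
  have hYapp : ∀ x, Y x = x - ν⁻¹ • M x := by
    intro x
    rw [hYdef]
    simp [ContinuousLinearMap.sub_apply]
  have hYform : ∀ x, ⟪Y x, x⟫ = ‖x‖ ^ 2 - ν⁻¹ * ⟪M x, x⟫ := by
    intro x
    rw [hYapp x, inner_sub_left, real_inner_smul_left, real_inner_self_eq_norm_sq]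
  have hYpos : Y.IsPositive := by
    refine isPositive_of_inner hYsa (fun x => ?_)
    rw [hYform x]
    linarith [hMform2 x]
  have hYform2 : ∀ x, ⟪Y x, x⟫ ≤ q * ‖x‖ ^ 2 := by
    intro x
    rw [hYform x, hqdef]
    have := hMform x
    nlinarith [this]
  have hYnorm : ‖Y‖ ≤ q := pos_norm_le hYpos hq0 hYform2
  set s : ℝ := (1 + q) / 2 with hsdef
  have hs0 : 0 ≤ s := by linarith
  have hs1 : s < 1 := by linarith
  have hqs : q + s * s ≤ 2 * s := by nlinarith
  set D : Set (V →L[ℝ] V) :=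
    {X | ‖X‖ ≤ s ∧ IsSelfAdjoint X ∧ ∀ W, M * W = W * M → X * W = W * X} with hDdef
  have hDclosed : IsClosed D := by
    have c1 : IsClosed {X : V →L[ℝ] V | ‖X‖ ≤ s} := isClosed_le continuous_norm continuous_const
    have c2 : IsClosed {X : V →L[ℝ] V | IsSelfAdjoint X} := by
      have : {X : V →L[ℝ] V | IsSelfAdjoint X} = {X | star X = X} := rfl
      rw [this]
      exact isClosed_eq continuous_star continuous_id
    have c3 : IsClosed {X : V →L[ℝ] V | ∀ W, M * W = W * M → X * W = W * X} := by
      have : {X : V →L[ℝ] V | ∀ W, M * W = W * M → X * W = W * X} =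
          ⋂ (W : V →L[ℝ] V), ⋂ (_ : M * W = W * M), {X | X * W = W * X} := by
        ext X
        simp [Set.mem_iInter]
      rw [this]
      exact isClosed_iInter fun W => isClosed_iInter fun _ =>
        isClosed_eq (continuous_id.mul continuous_const) (continuous_const.mul continuous_id)
    have hDeq : D = {X : V →L[ℝ] V | ‖X‖ ≤ s} ∩ ({X | IsSelfAdjoint X} ∩
        {X | ∀ W, M * W = W * M → X * W = W * X}) := rfl
    rw [hDeq]
    exact c1.inter (c2.inter c3)
  set f : (V →L[ℝ] V) → (V →L[ℝ] V) := fun X => (2⁻¹ : ℝ) • (Y + X * X) with hfdef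
  have hmaps : Set.MapsTo f D D := by
    rintro X ⟨hx1, hx2, hx3⟩
    refine ⟨?_, ?_, ?_⟩
    · have hb : ‖f X‖ ≤ 2⁻¹ * (‖Y‖ + ‖X‖ * ‖X‖) := by
        have hfapp : f X = (2⁻¹ : ℝ) • (Y + X * X) := rfl
        rw [hfapp]
        have hns : ‖(2⁻¹ : ℝ) • (Y + X * X)‖ = 2⁻¹ * ‖Y + X * X‖ := by
          rw [norm_smul (2⁻¹ : ℝ) (Y + X * X)]
          norm_num
        rw [hns]
        gcongr
        exact (norm_add_le _ _).trans (by gcongr; exact norm_mul_le X X)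
      have : 2⁻¹ * (‖Y‖ + ‖X‖ * ‖X‖) ≤ s := by
        have hXs : ‖X‖ * ‖X‖ ≤ s * s := by nlinarith [norm_nonneg X]
        nlinarith [hYnorm]
      linarith [hb]
    · have hXX : IsSelfAdjoint (X * X) := by
        have : star (X * X) = X * X := by rw [star_mul, hx2.star_eq]
        exact this
      exact sa_smul (hYsa.add hXX)
    · intro W hW
      have hYW : Y * W = W * Y := by
        rw [hYdef, sub_mul, mul_sub, one_mul, mul_one, smul_mul_assoc, mul_smul_comm, hW]
      have hXW := hx3 W hW
      have hXXW : X * X * W = W * (X * X) := by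
        rw [mul_assoc, hXW, ← mul_assoc, hXW, mul_assoc]
      show ((2⁻¹ : ℝ) • (Y + X * X)) * W = W * ((2⁻¹ : ℝ) • (Y + X * X))
      rw [smul_mul_assoc, mul_smul_comm, add_mul, mul_add, hYW, hXXW]
  set K : NNReal := Real.toNNReal s with hKdef
  have hKs : (K : ℝ) = s := Real.coe_toNNReal s hs0
  have hcontr : ContractingWith K (hmaps.restrict f D D) := by
    constructor
    · rw [← NNReal.coe_lt_coe, hKs, NNReal.coe_one]
      exact hs1
    · refine LipschitzWith.of_dist_le_mul (fun a b => ?_)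
      rw [Subtype.dist_eq, Set.MapsTo.val_restrict_apply, Set.MapsTo.val_restrict_apply, hKs]
      set X : V →L[ℝ] V := a.1 with hXdef
      set X' : V →L[ℝ] V := b.1 with hX'def
      have hXs : ‖X‖ ≤ s := a.2.1
      have hX's : ‖X'‖ ≤ s := b.2.1
      rw [dist_eq_norm, Subtype.dist_eq, dist_eq_norm]
      have hdiff : f X - f X' = (2⁻¹ : ℝ) • (X * (X - X') + (X - X') * X') := by
        show (2⁻¹ : ℝ) • (Y + X * X) - (2⁻¹ : ℝ) • (Y + X' * X') = _
        rw [← smul_sub]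
        congr 1
        noncomm_ring
      rw [hdiff]
      have hn1 : ‖X * (X - X') + (X - X') * X'‖ ≤ (‖X‖ + ‖X'‖) * ‖X - X'‖ := by
        calc ‖X * (X - X') + (X - X') * X'‖ ≤ ‖X * (X - X')‖ + ‖(X - X') * X'‖ :=
              norm_add_le _ _
          _ ≤ ‖X‖ * ‖X - X'‖ + ‖X - X'‖ * ‖X'‖ := add_le_add (norm_mul_le _ _) (norm_mul_le _ _)
          _ = (‖X‖ + ‖X'‖) * ‖X - X'‖ := by ring
      have hns : ‖(2⁻¹ : ℝ) • (X * (X - X') + (X - X') * X')‖ =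
          2⁻¹ * ‖X * (X - X') + (X - X') * X'‖ := by
        rw [norm_smul (2⁻¹ : ℝ) (X * (X - X') + (X - X') * X')]
        norm_num
      rw [hns]
      have : (2:ℝ)⁻¹ * ((‖X‖ + ‖X'‖) * ‖X - X'‖) ≤ s * ‖X - X'‖ := by
        nlinarith [norm_nonneg (X - X'), hXs, hX's]
      calc (2:ℝ)⁻¹ * ‖X * (X - X') + (X - X') * X'‖
          ≤ (2:ℝ)⁻¹ * ((‖X‖ + ‖X'‖) * ‖X - X'‖) := by
            exact mul_le_mul_of_nonneg_left hn1 (by norm_num)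
        _ ≤ s * ‖X - X'‖ := this
  have h0D : (0 : V →L[ℝ] V) ∈ D := by
    refine ⟨by simpa using hs0, ?_, fun W _ => by rw [zero_mul, mul_zero]⟩
    exact IsSelfAdjoint.zero _
  obtain ⟨F, hFD, hFfix, -, -⟩ :=
    hcontr.exists_fixedPoint' hDclosed.isComplete hmaps h0D (edist_ne_top _ _)
  obtain ⟨hFnorm, hFsa, hFcomm⟩ := hFD
  have hfix : (2⁻¹ : ℝ) • (Y + F * F) = F := hFfix
  have hFF : F * F = (2:ℝ) • F - Y := by
    have h := congrArg (fun Z => (2:ℝ) • Z) hfix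
    simp only [smul_smul] at h
    norm_num at h
    have h' : Y + F * F = (2:ℝ) • F := h
    rw [← h']
    abel
  have hsq1 : (1 - F) * (1 - F) = ν⁻¹ • M := by
    have e1 : (1 - F) * (1 - F) = 1 - ((2:ℝ) • F - F * F) := by
      have : (1 - F) * (1 - F) = 1 - (F + F) + F * F := by noncomm_ring
      rw [this, two_smul]
      abel
    rw [e1, hFF]
    have : (2:ℝ) • F - ((2:ℝ) • F - Y) = Y := by abel
    rw [this, hYdef]
    abel
  set R : V →L[ℝ] V := Real.sqrt ν • (1 - F) with hRdef
  have hRR : R * R = M := by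
    rw [hRdef, smul_mul_smul_comm, hsq1, smul_smul, Real.mul_self_sqrt (le_of_lt hν),
      mul_inv_cancel₀ (ne_of_gt hν), one_smul]
  have h1Fsa : IsSelfAdjoint (1 - F) := (IsSelfAdjoint.one (V →L[ℝ] V)).sub hFsa
  have hRpos : R.IsPositive := by
    refine isPositive_of_inner (sa_smul h1Fsa) (fun x => ?_)
    have happ : R x = Real.sqrt ν • ((1 - F) x) := by rw [hRdef]; rfl
    rw [happ, real_inner_smul_left]
    have h1F : ⟪(1 - F) x, x⟫ = ‖x‖ ^ 2 - ⟪F x, x⟫ := by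
      rw [ContinuousLinearMap.sub_apply, inner_sub_left, ContinuousLinearMap.one_apply,
        real_inner_self_eq_norm_sq]
    have hFb : ⟪F x, x⟫ ≤ s * ‖x‖ ^ 2 := by
      calc ⟪F x, x⟫ ≤ ‖F x‖ * ‖x‖ := real_inner_le_norm _ _
        _ ≤ (‖F‖ * ‖x‖) * ‖x‖ := mul_le_mul_of_nonneg_right (F.le_opNorm x) (norm_nonneg x)
        _ ≤ (s * ‖x‖) * ‖x‖ := by
            exact mul_le_mul_of_nonneg_right
              (mul_le_mul_of_nonneg_right hFnorm (norm_nonneg x)) (norm_nonneg x)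
        _ = s * ‖x‖ ^ 2 := by ring
    have : 0 ≤ ⟪(1 - F) x, x⟫ := by
      rw [h1F]
      nlinarith [norm_nonneg x, hs1]
    exact mul_nonneg (Real.sqrt_nonneg _) this
  have hRcomm : ∀ W, M * W = W * M → R * W = W * R := by
    intro W hW
    have hFW := hFcomm W hW
    rw [hRdef, smul_mul_assoc, mul_smul_comm, sub_mul, mul_sub, one_mul, mul_one, hFW]
  exact ⟨R, hRpos, hRR, hRcomm⟩

end Helpers




open ContinuousLinearMap in
theorem stmt_18 {V : Type*} [NormedAddCommGroup V] [InnerProductSpace ℝ V] [CompleteSpace V]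
    (K L : Submodule ℝ V) (hKc : IsClosed (K : Set V)) (hLc : IsClosed (L : Set V))
    (hsup : K ⊔ L = ⊤) (hinf : K ⊓ L = ⊥)
    (P Q : V →L[ℝ] V) (hPsa : IsSelfAdjoint P) (hQsa : IsSelfAdjoint Q)
    (hPK : ∀ x, P x ∈ K) (hPfix : ∀ x ∈ K, P x = x)
    (hQL : ∀ x, Q x ∈ L) (hQfix : ∀ x ∈ L, Q x = x)
    (J T : V →L[ℝ] V) (hJsa : IsSelfAdjoint J) (hJ2 : J * J = 1)
    (hT : T.IsPositive) (hT2 : T * T = (P - Q) * (P - Q)) (hJT : P - Q = J * T)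
    (S Δ Δhalf : V →L[ℝ] V) (hSK : ∀ y ∈ K, S y = y) (hSL : ∀ z ∈ L, S z = -z)
    -- `Δ = (2 - (P+Q)) / (P+Q)` and `Δhalf` is its positive square root:
    (hΔ : Δ * (P + Q) = (2 : V →L[ℝ] V) - (P + Q))
    (hΔhalf : Δhalf.IsPositive) (hΔhalf2 : Δhalf * Δhalf = Δ) :
    ((2 : V →L[ℝ] V) - (P + Q)) * S = P - Q ∧
    adjoint S * J = J * S ∧
    S = J * Δhalf := by
  set A : V →L[ℝ] V := P + Q with hA
  set B : V →L[ℝ] V := P - Q with hB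
  have hAsa : IsSelfAdjoint A := hPsa.add hQsa
  have hBsa : IsSelfAdjoint B := hPsa.sub hQsa
  have hΔhalfsa : IsSelfAdjoint Δhalf := hΔhalf.isSelfAdjoint
  have hΔsa : IsSelfAdjoint Δ := by
    have h : star (Δhalf * Δhalf) = Δhalf * Δhalf := by rw [star_mul, hΔhalfsa.star_eq]
    rw [← hΔhalf2]
    exact h
  have hstar2 : star (2 : V →L[ℝ] V) = 2 := by
    have : (2 : V →L[ℝ] V) = 1 + 1 := one_add_one_eq_two.symm
    rw [this, star_add, star_one]
  have hAΔ : A * Δ = 2 - A := by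
    have h := congrArg star hΔ
    rw [star_mul, hΔsa.star_eq, hAsa.star_eq, star_sub, hstar2, hAsa.star_eq] at h
    exact h
  have h2eq : (2 : V →L[ℝ] V) = (2 : ℝ) • 1 := by
    have h1 : (2 : ℝ) • (1 : V →L[ℝ] V) = 1 + 1 := two_smul ℝ 1
    rw [h1]
    exact one_add_one_eq_two.symm
  set A' : V →L[ℝ] V := (2⁻¹ : ℝ) • (1 + Δ) with hA'
  have hhalf2 : (2⁻¹ : ℝ) • (2 : V →L[ℝ] V) = 1 := by
    rw [h2eq, smul_smul]
    norm_num
  have hA'A : A' * A = 1 := by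
    rw [hA', smul_mul_assoc, add_mul, one_mul, hΔ]
    have : A + ((2 : V →L[ℝ] V) - A) = 2 := by abel
    rw [this, hhalf2]
  have hAA' : A * A' = 1 := by
    rw [hA', mul_smul_comm, mul_add, mul_one, hAΔ]
    have : A + ((2 : V →L[ℝ] V) - A) = 2 := by abel
    rw [this, hhalf2]
  have hcommΔhalfΔ : Δhalf * Δ = Δ * Δhalf := by
    rw [← hΔhalf2, ← mul_assoc]
  have hcommΔhalfA' : Δhalf * A' = A' * Δhalf := by
    rw [hA', mul_smul_comm, smul_mul_assoc, mul_add, add_mul, mul_one, one_mul, hcommΔhalfΔ]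
  have hcommAΔhalf : A * Δhalf = Δhalf * A := by
    have key : A * Δhalf * A' = Δhalf := by
      rw [mul_assoc, hcommΔhalfA', ← mul_assoc, hAA', one_mul]
    calc A * Δhalf = A * Δhalf * (A' * A) := by rw [hA'A, mul_one]
      _ = (A * Δhalf * A') * A := (mul_assoc _ A' A).symm
      _ = Δhalf * A := by rw [key]
  have hdecomp : ∀ x : V, ∃ y z : V, y ∈ K ∧ z ∈ L ∧ x = y + z := by
    intro x
    have hx : x ∈ K ⊔ L := by rw [hsup]; trivial
    obtain ⟨y, hy, z, hz, hyz⟩ := Submodule.mem_sup.mp hx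
    exact ⟨y, z, hy, hz, hyz.symm⟩
  have hSA : S * A = B := by
    ext x
    rw [ContinuousLinearMap.mul_apply, hA, hB, ContinuousLinearMap.add_apply,
      ContinuousLinearMap.sub_apply, map_add, hSK _ (hPK x), hSL _ (hQL x), ← sub_eq_add_neg]
  have hSS : S * S = 1 := by
    ext x
    obtain ⟨y, z, hy, hz, rfl⟩ := hdecomp x
    rw [ContinuousLinearMap.mul_apply, ContinuousLinearMap.one_apply, map_add, hSK y hy,
      hSL z hz, map_add, hSK y hy, map_neg, hSL z hz, neg_neg]
  have goal1 : ((2 : V →L[ℝ] V) - A) * S = B := by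
    ext x
    obtain ⟨y, z, hy, hz, rfl⟩ := hdecomp x
    rw [ContinuousLinearMap.mul_apply, map_add, hSK y hy, hSL z hz, h2eq, hA, hB]
    simp only [ContinuousLinearMap.sub_apply, ContinuousLinearMap.add_apply,
      ContinuousLinearMap.smul_apply, ContinuousLinearMap.one_apply, map_add, map_neg]
    rw [hPfix y hy, hQfix z hz]
    module
  have hPP : P * P = P := by
    ext x
    rw [ContinuousLinearMap.mul_apply]
    exact hPfix _ (hPK x)
  have hQQ : Q * Q = Q := by
    ext x
    rw [ContinuousLinearMap.mul_apply]
    exact hQfix _ (hQL x)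
  have hM_eq : B * B = A * (2 - A) := by
    have e : B * B - A * ((2 : V →L[ℝ] V) - A) = 2 * (P * P - P) + 2 * (Q * Q - Q) := by
      rw [hA, hB]
      noncomm_ring
    rw [hPP, hQQ] at e
    simp only [sub_self, mul_zero, add_zero] at e
    exact sub_eq_zero.mp e
  have hMsa : IsSelfAdjoint (B * B) := by
    have h : star (B * B) = B * B := by rw [star_mul, hBsa.star_eq]
    exact h
  have hMpos : (B * B).IsPositive := by
    refine isPositive_of_inner hMsa (fun x => ?_)
    rw [ContinuousLinearMap.mul_apply, sa_inner_move hBsa (B x) x]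
    rw [← sa_inner_move hBsa (B x) x, sa_inner_move hBsa (B x) x]
    exact real_inner_self_nonneg
  set Binv : V →L[ℝ] V := A' * S with hBinvdef
  have hBBinv : B * Binv = 1 := by
    rw [hBinvdef, ← hSA]
    calc S * A * (A' * S) = S * (A * A') * S := by rw [mul_assoc, mul_assoc, mul_assoc]
      _ = S * S := by rw [hAA', mul_one]
      _ = 1 := hSS
  have hBinvB : Binv * B = 1 := by
    rw [hBinvdef, ← hSA]
    calc A' * S * (S * A) = A' * (S * S) * A := by rw [mul_assoc, mul_assoc, mul_assoc]
      _ = A' * A := by rw [hSS, mul_one]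
      _ = 1 := hA'A
  have hMN : (B * B) * (Binv * Binv) = 1 := by
    rw [mul_assoc, ← mul_assoc B Binv Binv, hBBinv, one_mul, hBBinv]
  have hNM : (Binv * Binv) * (B * B) = 1 := by
    rw [mul_assoc, ← mul_assoc Binv B B, hBinvB, one_mul, hBinvB]
  obtain ⟨R, hRpos, hRR, hRcomm⟩ := exists_sqrt (B * B) (Binv * Binv) hMpos hMN hNM
  have hMT : (B * B) * T = T * (B * B) := by
    rw [← hT2, mul_assoc, ← mul_assoc]
  have hTR : T = R := sqrt_unique hT hRpos (hRcomm T hMT).symm (hT2.trans hRR.symm)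
  have hMA : (B * B) * A = A * (B * B) := by
    rw [hM_eq]
    noncomm_ring
  have h2Δhalf : (2 : V →L[ℝ] V) * Δhalf = Δhalf * 2 := by
    rw [two_mul, mul_two]
  have h2ΔhalfA : ((2 : V →L[ℝ] V) - A) * Δhalf = Δhalf * (2 - A) := by
    rw [sub_mul, mul_sub, h2Δhalf, hcommAΔhalf]
  have hMΔhalf : (B * B) * Δhalf = Δhalf * (B * B) := by
    rw [hM_eq, mul_assoc, h2ΔhalfA, ← mul_assoc, hcommAΔhalf, mul_assoc]
  have hTA : T * A = A * T := by
    rw [hTR]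
    exact hRcomm A hMA
  have hTΔhalf : T * Δhalf = Δhalf * T := by
    rw [hTR]
    exact hRcomm Δhalf hMΔhalf
  have hTΔ : T * Δ = Δ * T := by
    rw [← hΔhalf2, ← mul_assoc, hTΔhalf, mul_assoc, hTΔhalf, ← mul_assoc]
  have hTA'c : T * A' = A' * T := by
    rw [hA', mul_smul_comm, smul_mul_assoc, mul_add, add_mul, mul_one, one_mul, hTΔ]
  have hA'sa : IsSelfAdjoint A' := by
    have h : star ((2⁻¹ : ℝ) • ((1 : V →L[ℝ] V) + Δ)) = (2⁻¹ : ℝ) • ((1 : V →L[ℝ] V) + Δ) := by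
      rw [star_smul, star_trivial, star_add, star_one, hΔsa.star_eq]
    rw [hA']
    exact h
  have hTA'sa : IsSelfAdjoint (T * A') := by
    have h : star (T * A') = T * A' := by
      rw [star_mul, hA'sa.star_eq, hT.isSelfAdjoint.star_eq, ← hTA'c]
    exact h
  have hTA'eq : T * A' = (2⁻¹ : ℝ) • (T + T * Δ) := by
    rw [hA', mul_smul_comm, mul_add, mul_one]
  have hTΔexp : T * Δ = Δhalf * T * Δhalf := by
    rw [← hΔhalf2, ← mul_assoc, hTΔhalf]
  have hTA'pos : (T * A').IsPositive := by
    refine isPositive_of_inner hTA'sa (fun x => ?_)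
    rw [hTA'eq, ContinuousLinearMap.smul_apply, ContinuousLinearMap.add_apply,
      real_inner_smul_left, inner_add_left]
    have h1 : (0:ℝ) ≤ (inner ℝ (T x) x : ℝ) := pos_inner_nonneg hT x
    have h2 : (inner ℝ ((T * Δ) x) x : ℝ) = (inner ℝ (T (Δhalf x)) (Δhalf x) : ℝ) := by
      rw [hTΔexp, ContinuousLinearMap.mul_apply, ContinuousLinearMap.mul_apply]
      exact sa_inner_move hΔhalfsa (T (Δhalf x)) x
    have h3 : (0:ℝ) ≤ (inner ℝ ((T * Δ) x) x : ℝ) := by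
      rw [h2]
      exact pos_inner_nonneg hT (Δhalf x)
    nlinarith [h1, h3]
  have hΔexp : Δ = ((2 : V →L[ℝ] V) - A) * A' := by
    calc Δ = Δ * (A * A') := by rw [hAA', mul_one]
      _ = (Δ * A) * A' := (mul_assoc _ _ _).symm
      _ = ((2 : V →L[ℝ] V) - A) * A' := by rw [hΔ]
  have hcommΔhalfTA' : Δhalf * (T * A') = (T * A') * Δhalf := by
    calc Δhalf * (T * A') = (Δhalf * T) * A' := (mul_assoc _ _ _).symm
      _ = (T * Δhalf) * A' := by rw [hTΔhalf]
      _ = T * (Δhalf * A') := mul_assoc _ _ _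
      _ = T * (A' * Δhalf) := by rw [hcommΔhalfA']
      _ = (T * A') * Δhalf := (mul_assoc _ _ _).symm
  have hsq2 : Δhalf * Δhalf = (T * A') * (T * A') := by
    have e1 : (T * A') * (T * A') = (T * T) * (A' * A') := by
      calc (T * A') * (T * A') = T * (A' * T) * A' := by
            rw [mul_assoc, ← mul_assoc A' T A']
            rw [← mul_assoc]
        _ = T * (T * A') * A' := by rw [hTA'c]
        _ = (T * T) * (A' * A') := by rw [← mul_assoc, mul_assoc (T*T) A' A']
    have e2 : (T * T) * (A' * A') = ((2 : V →L[ℝ] V) - A) * A' := by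
      rw [hT2, hM_eq]
      have hAcomm : A * ((2 : V →L[ℝ] V) - A) = ((2 : V →L[ℝ] V) - A) * A := by noncomm_ring
      calc A * ((2 : V →L[ℝ] V) - A) * (A' * A') = ((2 : V →L[ℝ] V) - A) * A * (A' * A') := by
            rw [hAcomm]
        _ = ((2 : V →L[ℝ] V) - A) * (A * A') * A' := by
            rw [mul_assoc, mul_assoc, mul_assoc]
        _ = ((2 : V →L[ℝ] V) - A) * A' := by rw [hAA', mul_one]
    rw [hΔhalf2, e1, e2, hΔexp]
  have hΔhalfeq : Δhalf = T * A' := sqrt_unique hΔhalf hTA'pos hcommΔhalfTA' hsq2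
  have goal3 : S = J * Δhalf := by
    rw [hΔhalfeq, ← mul_assoc, ← hJT, ← hSA, mul_assoc, hAA', mul_one]
  have goal2 : adjoint S * J = J * S := by
    have hadj : adjoint S = Δhalf * J := by
      rw [← ContinuousLinearMap.star_eq_adjoint, goal3, star_mul, hΔhalfsa.star_eq, hJsa.star_eq]
    rw [hadj, mul_assoc, hJ2, mul_one, goal3, ← mul_assoc, hJ2, one_mul]
  exact ⟨goal1, goal2, goal3⟩
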